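/- The generating function h_A(t) = 1 + ∑_{k≥1} c_{A,k} t^k is a rational function of t, for any finite-dimensional algebra A over a finite field 𝔽_q. -/

import Mathlib

/-- `k`-tuples of pairwise commuting elements of `A`. -/
def CommTuple (A : Type) [Ring A] (k : ℕ) : Type :=
  {v : Fin k → A // ∀ i j, Commute (v i) (v j)}

/-- Simultaneous conjugation by `A*` on commuting `k`-tuples. -/
def tupleConj (A : Type) [Ring A] (k : ℕ) (v w : CommTuple A k) : Prop :=
  ∃ g : Aˣ, ∀ i, (g : A) * v.1 i * ((g⁻¹ : Aˣ) : A) = w.1 i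

noncomputable section AuxRational

/-- The geometric sequence `k ↦ m^k` in `ℚ`. -/
def expSeq (m : ℕ) : ℕ → ℚ := fun k => (m : ℚ) ^ k

/-- The span of all geometric sequences: "exponential sums". -/
def ExpSpan : Submodule ℚ (ℕ → ℚ) := Submodule.span ℚ (Set.range expSeq)

lemma geom_inverse (r : ℚ) :
    (1 - PowerSeries.C r * PowerSeries.X) * PowerSeries.mk (fun k => r ^ k) = 1 := by
  ext n
  rw [sub_mul, one_mul, mul_assoc, map_sub, PowerSeries.coeff_C_mul]
  cases n with
  | zero => simp
  | succ n => simp [PowerSeries.coeff_succ_X_mul, pow_succ, mul_comm]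

/-- Any sequence in the span of geometric sequences has a rational generating function. -/
lemma rational_of_mem_span (c : ℕ → ℚ) (hc : c ∈ ExpSpan) :
    ∃ P Q : Polynomial ℚ, Q.coeff 0 ≠ 0 ∧
      (Q : PowerSeries ℚ) * PowerSeries.mk c = (P : PowerSeries ℚ) := by
  rw [ExpSpan, Finsupp.mem_span_range_iff_exists_finsupp] at hc
  obtain ⟨a, ha⟩ := hc
  set s := a.support with hs
  have hck : ∀ k, c k = ∑ i ∈ s, a i * (i : ℚ) ^ k := by
    intro k
    rw [← ha]
    rw [Finsupp.sum]
    simp [expSeq, hs]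
  refine ⟨∑ i ∈ s, Polynomial.C (a i) *
      ∏ j ∈ s.erase i, (1 - Polynomial.C (j : ℚ) * Polynomial.X),
    ∏ j ∈ s, (1 - Polynomial.C (j : ℚ) * Polynomial.X), ?_, ?_⟩
  · have : (∏ j ∈ s, (1 - Polynomial.C (j : ℚ) * Polynomial.X)).coeff 0 = 1 := by
      rw [← Polynomial.constantCoeff_apply, map_prod]
      simp
    rw [this]; norm_num
  · have hmk : PowerSeries.mk c =
        ∑ i ∈ s, PowerSeries.C (a i) * PowerSeries.mk (fun k => (i : ℚ) ^ k) := by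
      ext k
      rw [map_sum]
      simp [hck k]
    have hfac : ∀ j : ℕ, ((1 - Polynomial.C (j:ℚ) * Polynomial.X : Polynomial ℚ) :
        PowerSeries ℚ) = 1 - PowerSeries.C (j:ℚ) * PowerSeries.X := by
      intro j
      simp only [Polynomial.coe_sub, Polynomial.coe_one, Polynomial.coe_mul,
        Polynomial.coe_C, Polynomial.coe_X]
    have hQ : ((∏ j ∈ s, (1 - Polynomial.C (j : ℚ) * Polynomial.X) : Polynomial ℚ) :
        PowerSeries ℚ) = ∏ j ∈ s, (1 - PowerSeries.C (j : ℚ) * PowerSeries.X) := by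
      rw [← Polynomial.coeToPowerSeries.ringHom_apply, map_prod]
      exact Finset.prod_congr rfl fun j _ => by
        rw [Polynomial.coeToPowerSeries.ringHom_apply, hfac]
    have hP : ((∑ i ∈ s, Polynomial.C (a i) *
        ∏ j ∈ s.erase i, (1 - Polynomial.C (j : ℚ) * Polynomial.X) : Polynomial ℚ) :
        PowerSeries ℚ) = ∑ i ∈ s, PowerSeries.C (a i) *
        ∏ j ∈ s.erase i, (1 - PowerSeries.C (j : ℚ) * PowerSeries.X) := by
      rw [← Polynomial.coeToPowerSeries.ringHom_apply, map_sum]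
      refine Finset.sum_congr rfl fun i _ => ?_
      rw [map_mul, map_prod]
      rw [Polynomial.coeToPowerSeries.ringHom_apply, Polynomial.coe_C]
      exact congrArg _ (Finset.prod_congr rfl fun j _ => by
        rw [Polynomial.coeToPowerSeries.ringHom_apply, hfac])
    rw [hmk, hQ, hP, Finset.mul_sum]
    refine Finset.sum_congr rfl fun i hi => ?_
    rw [← Finset.mul_prod_erase _ _ hi]
    calc ((1 - PowerSeries.C (i:ℚ) * PowerSeries.X) *
          ∏ j ∈ s.erase i, (1 - PowerSeries.C (j : ℚ) * PowerSeries.X)) *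
          (PowerSeries.C (a i) * PowerSeries.mk fun k => (i : ℚ) ^ k)
        = PowerSeries.C (a i) *
          ((∏ j ∈ s.erase i, (1 - PowerSeries.C (j : ℚ) * PowerSeries.X)) *
            ((1 - PowerSeries.C (i:ℚ) * PowerSeries.X) *
              PowerSeries.mk fun k => (i : ℚ) ^ k)) := by ring
      _ = _ := by rw [geom_inverse]; ring

end AuxRational

noncomputable section AuxCount

variable {A : Type} [Fintype A] [DecidableEq A]

/-- number of `k`-tuples with image exactly `S`, as a rational. -/
def srjq (S : Finset A) : ℕ → ℚ := fun k =>
  (((Finset.univ : Finset (Fin k → A)).filter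
    (fun v => Finset.image v Finset.univ = S)).card : ℚ)

lemma sub_card (S : Finset A) (k : ℕ) :
    (((Finset.univ : Finset (Fin k → A)).filter
      (fun v => Finset.image v Finset.univ ⊆ S)).card) = S.card ^ k := by
  rw [← Fintype.card_subtype]
  have e : {v : Fin k → A // Finset.image v Finset.univ ⊆ S} ≃ (Fin k → {a // a ∈ S}) :=
    (Equiv.subtypeEquivRight (fun v => by
      simp [Finset.image_subset_iff])).trans (Equiv.subtypePiEquivPi)
  rw [Fintype.card_congr e, Fintype.card_fun, Fintype.card_coe, Fintype.card_fin]

lemma sum_srjq (S : Finset A) (k : ℕ) :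
    ((S.card : ℚ)) ^ k = ∑ T ∈ S.powerset, srjq T k := by
  have h := Finset.card_eq_sum_card_fiberwise
    (s := (Finset.univ : Finset (Fin k → A)).filter
      (fun v => Finset.image v Finset.univ ⊆ S))
    (t := S.powerset) (f := fun v => Finset.image v Finset.univ)
    (fun v hv => by
      rw [Finset.mem_coe, Finset.mem_powerset]
      exact (Finset.mem_filter.mp hv).2)
  rw [sub_card S k] at h
  have h2 : ∀ T ∈ S.powerset,
      (((Finset.univ : Finset (Fin k → A)).filter
        (fun v => Finset.image v Finset.univ ⊆ S)).filter
        (fun v => Finset.image v Finset.univ = T)).card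
      = ((Finset.univ : Finset (Fin k → A)).filter
        (fun v => Finset.image v Finset.univ = T)).card := by
    intro T hT
    rw [Finset.mem_powerset] at hT
    congr 1
    rw [Finset.filter_filter]
    apply Finset.filter_congr
    intro v _
    constructor
    · exact fun h => h.2
    · exact fun h => ⟨h ▸ hT, h⟩
  rw [Finset.sum_congr rfl h2] at h
  have := congrArg (fun n : ℕ => (n : ℚ)) h
  simpa [srjq, Nat.cast_sum] using this

lemma srjq_mem (S : Finset A) : srjq S ∈ ExpSpan := by
  induction S using Finset.strongInduction with
  | _ S ih =>
    have key : srjq S = expSeq S.card - ∑ T ∈ S.powerset.erase S, srjq T := by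
      funext k
      have h := sum_srjq S k
      rw [← Finset.sum_erase_add _ _ (Finset.mem_powerset_self S)] at h
      have : (∑ T ∈ S.powerset.erase S, srjq T) k
          = ∑ T ∈ S.powerset.erase S, srjq T k := by
        simp [Finset.sum_apply]
      simp only [Pi.sub_apply, expSeq, this]
      linarith
    rw [key]
    refine sub_mem (Submodule.subset_span ⟨S.card, rfl⟩)
      (Submodule.sum_mem _ fun T hT => ih T ?_)
    rw [Finset.mem_erase, Finset.mem_powerset] at hT
    exact lt_of_le_of_ne hT.2 hT.1

/-- The number of pairwise `R`-related `k`-tuples is an exponential sum. -/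
lemma cliqueCount_mem (R : A → A → Prop) [DecidableRel R] :
    (fun k => (Nat.card {v : Fin k → A // ∀ i j, R (v i) (v j)} : ℚ)) ∈ ExpSpan := by
  have key : ∀ k, (Nat.card {v : Fin k → A // ∀ i j, R (v i) (v j)} : ℚ)
      = ∑ T ∈ (Finset.univ : Finset A).powerset.filter
          (fun S => ∀ a ∈ S, ∀ b ∈ S, R a b), srjq T k := by
    intro k
    rw [Nat.card_eq_fintype_card, Fintype.card_subtype]
    have h := Finset.card_eq_sum_card_fiberwise
      (s := (Finset.univ : Finset (Fin k → A)).filter (fun v => ∀ i j, R (v i) (v j)))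
      (t := (Finset.univ : Finset A).powerset.filter (fun S => ∀ a ∈ S, ∀ b ∈ S, R a b))
      (f := fun v => Finset.image v Finset.univ)
      (fun v hv => by
        rw [Finset.mem_coe] at hv ⊢
        rw [Finset.mem_filter] at hv ⊢
        refine ⟨Finset.mem_powerset.mpr (Finset.subset_univ _), ?_⟩
        intro a ha b hb
        obtain ⟨i, _, rfl⟩ := Finset.mem_image.mp ha
        obtain ⟨j, _, rfl⟩ := Finset.mem_image.mp hb
        exact hv.2 i j)
    have h2 : ∀ T ∈ (Finset.univ : Finset A).powerset.filter
        (fun S => ∀ a ∈ S, ∀ b ∈ S, R a b),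
        (((Finset.univ : Finset (Fin k → A)).filter (fun v => ∀ i j, R (v i) (v j))).filter
          (fun v => Finset.image v Finset.univ = T)).card
        = ((Finset.univ : Finset (Fin k → A)).filter
          (fun v => Finset.image v Finset.univ = T)).card := by
      intro T hT
      rw [Finset.mem_filter] at hT
      congr 1
      rw [Finset.filter_filter]
      apply Finset.filter_congr
      intro v _
      constructor
      · exact fun h => h.2
      · intro h
        refine ⟨fun i j => ?_, h⟩
        exact hT.2 _ (h ▸ Finset.mem_image_of_mem v (Finset.mem_univ i))
          _ (h ▸ Finset.mem_image_of_mem v (Finset.mem_univ j))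
    rw [Finset.sum_congr rfl h2] at h
    rw [h]
    simp [srjq, Nat.cast_sum]
  have : (fun k => (Nat.card {v : Fin k → A // ∀ i j, R (v i) (v j)} : ℚ))
      = ∑ T ∈ (Finset.univ : Finset A).powerset.filter
          (fun S => ∀ a ∈ S, ∀ b ∈ S, R a b), srjq T := by
    funext k
    rw [key k]
    simp [Finset.sum_apply]
  rw [this]
  exact Submodule.sum_mem _ fun T _ => srjq_mem T

end AuxCount

noncomputable section AuxAction

variable (A : Type) [Ring A]

private lemma conj_commute {g : Aˣ} {a b : A} (h : Commute a b) :
    Commute ((g : A) * a * ((g⁻¹ : Aˣ) : A)) ((g : A) * b * ((g⁻¹ : Aˣ) : A)) := by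
  unfold Commute SemiconjBy
  simp only [mul_assoc, Units.inv_mul_cancel_left]
  rw [← mul_assoc a b, ← mul_assoc b a, h.eq]

instance commTupleSMul (k : ℕ) : SMul Aˣ (CommTuple A k) :=
  ⟨fun g v => ⟨fun i => (g : A) * v.1 i * ((g⁻¹ : Aˣ) : A),
    fun i j => conj_commute A (v.2 i j)⟩⟩

lemma smul_val (k : ℕ) (g : Aˣ) (v : CommTuple A k) (i : Fin k) :
    (g • v).1 i = (g : A) * v.1 i * ((g⁻¹ : Aˣ) : A) := rfl

instance commTupleAction (k : ℕ) : MulAction Aˣ (CommTuple A k) where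
  one_smul v := Subtype.ext (funext fun i => by simp [smul_val])
  mul_smul g h v := Subtype.ext (funext fun i => by
    simp [smul_val, mul_assoc])

/-- The quotient by simultaneous conjugation is the quotient by the orbit relation. -/
def quotEquiv (k : ℕ) :
    Quot (tupleConj A k) ≃ Quotient (MulAction.orbitRel Aˣ (CommTuple A k)) := by
  refine Quot.congrRight fun v w => ?_
  show tupleConj A k v w ↔ MulAction.orbitRel Aˣ (CommTuple A k) v w
  rw [MulAction.orbitRel_apply, MulAction.mem_orbit_iff]
  constructor
  · rintro ⟨g, hg⟩
    refine ⟨g⁻¹, ?_⟩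
    have hgv : g • v = w := Subtype.ext (funext fun i => hg i)
    rw [← hgv, inv_smul_smul]
  · rintro ⟨g, hg⟩
    refine ⟨g⁻¹, fun i => ?_⟩
    have : g⁻¹ • v = w := by rw [← hg, inv_smul_smul]
    have := congrFun (congrArg Subtype.val this) i
    simpa [smul_val] using this

/-- The fixed points of conjugation by `g` on commuting tuples. -/
def fixedEquiv (k : ℕ) (g : Aˣ) :
    (MulAction.fixedBy (CommTuple A k) g) ≃
    {v : Fin k → A // ∀ i j, Commute (v i) (v j) ∧
      (g : A) * v i * ((g⁻¹ : Aˣ) : A) = v i ∧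
      (g : A) * v j * ((g⁻¹ : Aˣ) : A) = v j} where
  toFun x := ⟨x.1.1, fun i j => ⟨x.1.2 i j,
    congrFun (congrArg Subtype.val (x.2 : g • x.1 = x.1)) i,
    congrFun (congrArg Subtype.val (x.2 : g • x.1 = x.1)) j⟩⟩
  invFun v := ⟨⟨v.1, fun i j => (v.2 i j).1⟩,
    Subtype.ext (funext fun i => (v.2 i i).2.1)⟩
  left_inv _ := Subtype.ext (Subtype.ext rfl)
  right_inv _ := Subtype.ext rfl

set_option maxHeartbeats 1000000 in
/-- Burnside's lemma: the orbit counts form an exponential sum. -/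
lemma card_mem_span [Fintype A] [DecidableEq A] :
    (fun k => (Nat.card (Quot (tupleConj A k)) : ℚ)) ∈ ExpSpan := by
  classical
  have hGne : (Nat.card Aˣ : ℚ) ≠ 0 := by
    have : Nat.card Aˣ ≠ 0 := Nat.card_ne_zero.mpr ⟨⟨1⟩, inferInstance⟩
    exact_mod_cast this
  have key : ∀ k, (Nat.card (Quot (tupleConj A k)) : ℚ) * (Nat.card Aˣ : ℚ)
      = ∑ g : Aˣ, (Nat.card {v : Fin k → A // ∀ i j, Commute (v i) (v j) ∧
          (g : A) * v i * ((g⁻¹ : Aˣ) : A) = v i ∧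
          (g : A) * v j * ((g⁻¹ : Aˣ) : A) = v j} : ℚ) := by
    intro k
    haveI : Finite (CommTuple A k) := Subtype.finite
    haveI : Fintype (CommTuple A k) := Fintype.ofFinite _
    haveI : ∀ g : Aˣ, Fintype (MulAction.fixedBy (CommTuple A k) g) :=
      fun g => Fintype.ofFinite _
    haveI : Fintype (Quotient (MulAction.orbitRel Aˣ (CommTuple A k))) :=
      Fintype.ofFinite _
    have hb := MulAction.sum_card_fixedBy_eq_card_orbits_mul_card_group Aˣ (CommTuple A k)
    have h1 : (Nat.card (Quot (tupleConj A k)))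
        = Fintype.card (Quotient (MulAction.orbitRel Aˣ (CommTuple A k))) := by
      rw [← Nat.card_eq_fintype_card]
      exact Nat.card_congr (quotEquiv A k)
    have h2 : ∀ g : Aˣ, Fintype.card (MulAction.fixedBy (CommTuple A k) g)
        = Nat.card {v : Fin k → A // ∀ i j, Commute (v i) (v j) ∧
          (g : A) * v i * ((g⁻¹ : Aˣ) : A) = v i ∧
          (g : A) * v j * ((g⁻¹ : Aˣ) : A) = v j} := fun g => by
      rw [← Nat.card_eq_fintype_card]
      exact Nat.card_congr (fixedEquiv A k g)
    have h3 : Nat.card Aˣ = Fintype.card Aˣ := Nat.card_eq_fintype_card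
    rw [Finset.sum_congr rfl (fun g _ => h2 g)] at hb
    have := congrArg (fun n : ℕ => (n : ℚ)) hb
    simp only [Nat.cast_sum, Nat.cast_mul] at this
    rw [h1, h3]
    exact_mod_cast this.symm
  have heq : (fun k => (Nat.card (Quot (tupleConj A k)) : ℚ))
      = ∑ g : Aˣ, (Nat.card Aˣ : ℚ)⁻¹ •
          (fun k => (Nat.card {v : Fin k → A // ∀ i j, Commute (v i) (v j) ∧
            (g : A) * v i * ((g⁻¹ : Aˣ) : A) = v i ∧
            (g : A) * v j * ((g⁻¹ : Aˣ) : A) = v j} : ℚ)) := by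
    funext k
    rw [Finset.sum_apply]
    simp only [Pi.smul_apply, smul_eq_mul]
    rw [← Finset.mul_sum, ← key k]
    field_simp
  rw [heq]
  exact Submodule.sum_mem _ fun g _ =>
    Submodule.smul_mem _ _ (cliqueCount_mem
      (fun a b => Commute a b ∧ (g : A) * a * ((g⁻¹ : Aˣ) : A) = a ∧
        (g : A) * b * ((g⁻¹ : Aˣ) : A) = b))

end AuxAction

/-- For any finite-dimensional algebra `A` over a finite field, the generating function
`h_A(t) = 1 + ∑_{k≥1} c_{A,k} tᵏ` of the numbers of simultaneous similarity classes of
commuting `k`-tuples is a rational function of `t`: there are polynomials `P, Q` with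
`Q(0) ≠ 0` and `Q·h_A = P` as formal power series. (Note `c_{A,0} = 1`.) -/
theorem genfun_rational (F : Type) [Field F] [Fintype F]
    (A : Type) [Ring A] [Algebra F A] [FiniteDimensional F A] :
    ∃ P Q : Polynomial ℚ, Q.coeff 0 ≠ 0 ∧
      (Q : PowerSeries ℚ) * (PowerSeries.mk fun k => (Nat.card (Quot (tupleConj A k)) : ℚ)) =
        (P : PowerSeries ℚ) := by
  classical
  haveI : Finite A := Module.finite_of_finite F
  haveI : Fintype A := Fintype.ofFinite A
  exact rational_of_mem_span _ (card_mem_span A)
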